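/- Let Ω : ℝ → ℝ be C² with Ω'(t) < 0 for all t, let μ ∈ ℂ with Im μ > 0, let m > 0, and let ψ be a complex solution of -ψ'' + m²ψ + (Ω''+2Ω')(Ω-μ)^{-1} ψ = 0 on ℝ that decays exponentially together with ψ' at ±∞. Then ∫_ℝ (Ω''(t)+2Ω'(t)) |ψ(t)|² / (|Ω(t)-Re μ|² + (Im μ)²) dt = 0. -/
import Mathlib

open MeasureTheory Real Set Filter Topology

/-- The imaginary-part identity obtained by multiplying the eigenvalue equation by ψ̄ and
integrating by parts. -/
theorem imaginary_part_identity (Ω : ℝ → ℝ) (hΩ : ContDiff ℝ 2 Ω)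
    (hΩ' : ∀ t, deriv Ω t < 0) (μ : ℂ) (hμ : 0 < μ.im) (m : ℝ) (hm : 0 < m)
    (ψ : ℝ → ℂ) (hψ : ContDiff ℝ 2 ψ)
    (heq : ∀ t : ℝ, -(deriv (deriv ψ) t) + (m : ℂ) ^ 2 * ψ t
        + (((deriv (deriv Ω) t + 2 * deriv Ω t : ℝ) : ℂ) / ((Ω t : ℂ) - μ)) * ψ t = 0)
    (hdecay : ∃ C ε : ℝ, 0 < C ∧ 0 < ε ∧ ∀ t : ℝ,
      ‖ψ t‖ ≤ C * Real.exp (-ε * |t|) ∧ ‖deriv ψ t‖ ≤ C * Real.exp (-ε * |t|)) :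
    (∫ t : ℝ, (deriv (deriv Ω) t + 2 * deriv Ω t) * ‖ψ t‖ ^ 2 /
      ((Ω t - μ.re) ^ 2 + μ.im ^ 2)) = 0 := by
  set g : ℝ → ℝ := fun t => (deriv (deriv Ω) t + 2 * deriv Ω t) * ‖ψ t‖ ^ 2 /
      ((Ω t - μ.re) ^ 2 + μ.im ^ 2) with hg_def
  by_cases hg : Integrable g volume
  · -- main case
    set F : ℝ → ℝ := fun t => ((starRingEnd ℂ) (ψ t) * deriv ψ t).im with hF_def
    have hψ1 : Differentiable ℝ ψ := hψ.differentiable (by norm_num)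
    have hψ2 : Differentiable ℝ (deriv ψ) :=
      (hψ.iterate_deriv' 1 1).differentiable (by norm_num)
    have hden : ∀ t, (0:ℝ) < (Ω t - μ.re) ^ 2 + μ.im ^ 2 := fun t => by positivity
    have hderivF : ∀ t, HasDerivAt F (μ.im * g t) t := by
      intro t
      have h1 : HasDerivAt ψ (deriv ψ t) t := (hψ1 t).hasDerivAt
      have h2 : HasDerivAt (deriv ψ) (deriv (deriv ψ) t) t := (hψ2 t).hasDerivAt
      have h3 : HasDerivAt (fun s => (starRingEnd ℂ) (ψ s) * deriv ψ s)
          ((starRingEnd ℂ) (deriv ψ t) * deriv ψ t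
            + (starRingEnd ℂ) (ψ t) * deriv (deriv ψ) t) t := h1.star.mul h2
      have h4 : HasDerivAt F (((starRingEnd ℂ) (deriv ψ t) * deriv ψ t
            + (starRingEnd ℂ) (ψ t) * deriv (deriv ψ) t).im) t :=
        (Complex.imCLM.hasFDerivAt.comp_hasDerivAt t h3)
      convert h4 using 1
      have hpsi'' : deriv (deriv ψ) t = (m : ℂ) ^ 2 * ψ t
          + (((deriv (deriv Ω) t + 2 * deriv Ω t : ℝ) : ℂ) / ((Ω t : ℂ) - μ)) * ψ t := by
        have := heq t; linear_combination -this
      rw [hpsi'']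
      have e2 : (starRingEnd ℂ) (ψ t) * ψ t = ((‖ψ t‖ ^ 2 : ℝ) : ℂ) := by
        rw [Complex.conj_mul']; push_cast; ring
      have e2' : (starRingEnd ℂ) (deriv ψ t) * deriv ψ t = ((‖deriv ψ t‖ ^ 2 : ℝ) : ℂ) := by
        rw [Complex.conj_mul']; push_cast; ring
      set c : ℝ := deriv (deriv Ω) t + 2 * deriv Ω t
      have e3 : ((c : ℂ) / ((Ω t : ℂ) - μ)).im = c * μ.im / ((Ω t - μ.re) ^ 2 + μ.im ^ 2) := by
        rw [Complex.div_im]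
        simp [Complex.normSq_apply]
        ring
      rw [show (((starRingEnd ℂ)) (deriv ψ t) * deriv ψ t + (starRingEnd ℂ) (ψ t)
              * ((m : ℂ) ^ 2 * ψ t + ((c : ℂ) / ((Ω t : ℂ) - μ)) * ψ t))
            = ((‖deriv ψ t‖ ^ 2 : ℝ) : ℂ) + ((m:ℂ)^2) * ((‖ψ t‖ ^ 2 : ℝ) : ℂ)
              + ((c : ℂ) / ((Ω t : ℂ) - μ)) * ((‖ψ t‖ ^ 2 : ℝ) : ℂ) by
          rw [← e2, ← e2']; ring]
      rw [Complex.add_im, Complex.add_im, Complex.mul_im, Complex.mul_im]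
      have hmim : ((m:ℂ)^2).im = 0 := by rw [sq, Complex.mul_im]; simp
      simp only [Complex.ofReal_im, Complex.ofReal_re, e3, hmim]
      have hd := (hden t).ne'
      rw [hg_def]
      field_simp
      ring
    -- limits of F at ±∞
    obtain ⟨C, ε, hC, hε, hCε⟩ := hdecay
    have hbound : ∀ t, |F t| ≤ C ^ 2 * Real.exp (-(2 * ε) * |t|) := by
      intro t
      have h1 := (hCε t).1
      have h2 := (hCε t).2
      calc |F t| ≤ ‖(starRingEnd ℂ) (ψ t) * deriv ψ t‖ := Complex.abs_im_le_norm _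
        _ = ‖ψ t‖ * ‖deriv ψ t‖ := by rw [norm_mul]; simp
        _ ≤ (C * Real.exp (-ε * |t|)) * (C * Real.exp (-ε * |t|)) := by
            apply mul_le_mul h1 h2 (norm_nonneg _)
            positivity
        _ = C ^ 2 * Real.exp (-(2 * ε) * |t|) := by
            rw [mul_mul_mul_comm, ← Real.exp_add]; ring_nf
    have hblim : ∀ l : Filter ℝ, Tendsto (fun t : ℝ => |t|) l atTop →
        Tendsto F l (𝓝 0) := by
      intro l hl
      apply squeeze_zero_norm (fun t => hbound t)
      have : Tendsto (fun s : ℝ => C ^ 2 * Real.exp (-(2 * ε) * s)) atTop (𝓝 0) := by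
        rw [show (0:ℝ) = C ^ 2 * 0 by ring]
        exact (Real.tendsto_exp_atBot.comp
          (tendsto_id.const_mul_atTop_of_neg (by linarith))).const_mul _
      exact this.comp hl
    have htop : Tendsto F atTop (𝓝 0) := hblim _ tendsto_abs_atTop_atTop
    have hbot : Tendsto F atBot (𝓝 0) := hblim _ tendsto_abs_atBot_atTop
    -- integrate
    have hint : Integrable (fun t => μ.im * g t) volume := hg.const_mul _
    have hIoi : ∫ t in Ioi (0:ℝ), μ.im * g t = 0 - F 0 :=
      integral_Ioi_of_hasDerivAt_of_tendsto' (fun x _ => hderivF x)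
        hint.integrableOn htop
    have hIic : ∫ t in Iic (0:ℝ), μ.im * g t = F 0 - 0 :=
      integral_Iic_of_hasDerivAt_of_tendsto' (fun x _ => hderivF x)
        hint.integrableOn hbot
    have hsplit : (∫ t : ℝ, μ.im * g t) = 0 := by
      rw [← intervalIntegral.integral_Iic_add_Ioi hint.integrableOn hint.integrableOn, hIoi, hIic]
      ring
    rw [integral_const_mul] at hsplit
    rcases mul_eq_zero.1 hsplit with h | h
    · exact absurd h (ne_of_gt hμ)
    · exact h
  · exact integral_undef hg
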